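/- Let v, ṽ : [0,T] → ℝ^N both be differentiable with v(0) = ṽ(0) = u_init and satisfy τ_i v_i'(t) = -v_i(t) + Σ_{j=1}^N ω_{ij} H(v_j(t) - u_θ) + q_{∞,i}(t) for ALL t ∈ [0,T] (including t = 0 and every threshold time) and all i, where each τ_i > 0, q_∞ : [0,T] → ℝ^N is continuous, and H is the Heaviside function. If both v and ṽ are extra threshold simple and right smooth, then v(t) = ṽ(t) for all t ∈ [0,T]. That is, this problem has at most one solution that is both extra threshold simple and right smooth. -/

import Mathlib

open Set Finset Filter MeasureTheory

/-- The Heaviside function with `H 0 = 1/2`. -/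
noncomputable def Heaviside (x : ℝ) : ℝ :=
  if x < 0 then 0 else if x = 0 then 1/2 else 1

lemma heaviside_const {f : ℝ → ℝ} {s : Set ℝ} (hs : IsPreconnected s)
    (hf : ContinuousOn f s) (hne : ∀ x ∈ s, f x ≠ 0) {x y : ℝ}
    (hx : x ∈ s) (hy : y ∈ s) : Heaviside (f x) = Heaviside (f y) := by
  have samesign : ∀ a ∈ s, ∀ b ∈ s, f a < 0 → f b < 0 := by
    intro a ha b hb hfa
    by_contra hfb
    have hfb' : 0 < f b := lt_of_le_of_ne (not_lt.1 hfb) (Ne.symm (hne b hb))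
    have h0 : (0:ℝ) ∈ Icc (f a) (f b) := ⟨hfa.le, hfb'.le⟩
    have := (hs.image f hf).ordConnected.out ⟨a, ha, rfl⟩ ⟨b, hb, rfl⟩ h0
    obtain ⟨z, hz, hz0⟩ := this
    exact hne z hz hz0
  rcases lt_or_gt_of_ne (hne x hx) with h | h
  · have h2 := samesign x hx y hy h
    simp [Heaviside, h, h2]
  · have h2 : 0 < f y := by
      rcases lt_or_gt_of_ne (hne y hy) with h2 | h2
      · exact absurd (samesign y hy x hx h2) (not_lt.2 h.le)
      · exact h2
    simp [Heaviside, not_lt.2 h.le, not_lt.2 h2.le, h.ne', h2.ne']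

lemma eq_zero_of_decay {f : ℝ → ℝ} {τ a b : ℝ} (hτ : 0 < τ)
    (hc : ContinuousOn f (Icc a b))
    (hd : ∀ x ∈ Ico a b, HasDerivWithinAt f (-f x / τ) (Ici x) x)
    (ha : f a = 0) : ∀ x ∈ Icc a b, f x = 0 := by
  have hg : ∀ x ∈ Icc a b, f x * Real.exp (x / τ) = f a * Real.exp (a / τ) := by
    apply constant_of_has_deriv_right_zero
    · exact hc.mul ((Real.continuous_exp.comp (continuous_id.div_const τ)).continuousOn)
    · intro x hx
      have he : HasDerivAt (fun y => Real.exp (y / τ)) (Real.exp (x / τ) * (1 / τ)) x := by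
        have h1 : HasDerivAt (fun y : ℝ => y / τ) (1 / τ) x := (hasDerivAt_id x).div_const τ
        exact (Real.hasDerivAt_exp (x / τ)).comp x h1
      have := (hd x hx).mul he.hasDerivWithinAt
      have heq : -f x / τ * Real.exp (x / τ) + f x * (Real.exp (x / τ) * (1 / τ)) = 0 := by
        field_simp
        ring
      rwa [heq] at this
  intro x hx
  have := hg x hx
  rw [ha, zero_mul] at this
  have hexp : Real.exp (x / τ) ≠ 0 := (Real.exp_pos _).ne'
  exact (mul_eq_zero.1 this).resolve_right hexp

lemma partition_mono {L : ℕ} {a : ℕ → ℝ} (hmono : ∀ l < L, a l < a (l + 1)) :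
    ∀ {i j : ℕ}, i ≤ j → j ≤ L → a i ≤ a j := by
  intro i j hij hjL
  induction j with
  | zero => simp [Nat.le_zero.1 hij]
  | succ n ih =>
    rcases Nat.lt_succ_iff_lt_or_eq.1 (Nat.lt_succ_of_le hij) with h | h
    · exact le_trans (ih (Nat.lt_succ_iff.1 h) (le_of_lt (Nat.lt_of_succ_le hjL)))
        (hmono n (Nat.lt_of_succ_le hjL)).le
    · exact le_of_eq (by rw [h])

lemma partition_loc {L : ℕ} (hL : 0 < L) {a : ℕ → ℝ} {T t : ℝ}
    (h0 : a 0 = 0) (hTT : a L = T) (hmono : ∀ l < L, a l < a (l + 1))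
    (ht : 0 ≤ t) (htT : t < T) : ∃ l < L, a l ≤ t ∧ t < a (l + 1) := by
  classical
  set P := fun k => a k ≤ t with hP
  have hP0 : P 0 := by simp [hP, h0, ht]
  set l := Nat.findGreatest P L with hldef
  have hl : P l := Nat.findGreatest_spec (Nat.zero_le L) hP0
  have hlL : l ≤ L := Nat.findGreatest_le L
  have hlne : l ≠ L := by
    intro h
    rw [h] at hl
    exact absurd hl (by simp [hP, hTT, not_le.2 htT])
  have hlt : l < L := lt_of_le_of_ne hlL hlne
  refine ⟨l, hlt, hl, ?_⟩
  have := Nat.findGreatest_is_greatest (k := l + 1) (Nat.lt_succ_self l) (Nat.succ_le_of_lt hlt)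
  exact not_le.1 this

theorem stmt_10
    (N : ℕ) [NeZero N] (T : ℝ) (hT : 0 < T)
    (τ : Fin N → ℝ) (hτ : ∀ i, 0 < τ i)
    (ω : Fin N → Fin N → ℝ) (uθ : ℝ) (uinit : Fin N → ℝ)
    (qinf : ℝ → Fin N → ℝ) (hq_cont : ContinuousOn qinf (Set.Icc 0 T))
    (v w : ℝ → Fin N → ℝ) (v' w' : ℝ → Fin N → ℝ)
    (hvderiv : ∀ t ∈ Set.Icc (0:ℝ) T, HasDerivWithinAt v (v' t) (Set.Icc 0 T) t)
    (hwderiv : ∀ t ∈ Set.Icc (0:ℝ) T, HasDerivWithinAt w (w' t) (Set.Icc 0 T) t)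
    (hvinit : v 0 = uinit) (hwinit : w 0 = uinit)
    -- the ODE holds for ALL t ∈ [0,T], including threshold times
    (hvODE : ∀ t ∈ Set.Icc (0:ℝ) T, ∀ i,
      τ i * v' t i = -v t i + (∑ j, ω i j * Heaviside (v t j - uθ)) + qinf t i)
    (hwODE : ∀ t ∈ Set.Icc (0:ℝ) T, ∀ i,
      τ i * w' t i = -w t i + (∑ j, ω i j * Heaviside (w t j - uθ)) + qinf t i)
    -- v and w are extra threshold simple
    (hvets : ∃ L : ℕ, 0 < L ∧ ∃ a : ℕ → ℝ, a 0 = 0 ∧ a L = T ∧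
      (∀ l < L, a l < a (l + 1)) ∧
      (∀ l < L, ∀ s ∈ Set.Ioo (a l) (a (l + 1)),
        (Finset.univ.inf' Finset.univ_nonempty fun j => |v s j - uθ|) ≠ 0))
    (hwets : ∃ L : ℕ, 0 < L ∧ ∃ a : ℕ → ℝ, a 0 = 0 ∧ a L = T ∧
      (∀ l < L, a l < a (l + 1)) ∧
      (∀ l < L, ∀ s ∈ Set.Ioo (a l) (a (l + 1)),
        (Finset.univ.inf' Finset.univ_nonempty fun j => |w s j - uθ|) ≠ 0))
    -- v and w are right smooth
    (hvrs : ∀ t ∈ Set.Ico (0:ℝ) T, ContinuousWithinAt v' (Set.Ici t) t)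
    (hwrs : ∀ t ∈ Set.Ico (0:ℝ) T, ContinuousWithinAt w' (Set.Ici t) t) :
    ∀ t ∈ Set.Icc (0:ℝ) T, v t = w t := by
  classical
  obtain ⟨L, hL, a, ha0, haL, hainc, havoid⟩ := hvets
  obtain ⟨M, hM, b, hb0, hbM, hbinc, hbvoid⟩ := hwets
  have hvcont : ContinuousOn v (Icc 0 T) := fun t ht => (hvderiv t ht).continuousWithinAt
  have hwcont : ContinuousOn w (Icc 0 T) := fun t ht => (hwderiv t ht).continuousWithinAt
  -- Local extension
  have key : ∀ t0 ∈ Ico (0:ℝ) T, v t0 = w t0 →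
      ∃ t1, t0 < t1 ∧ t1 ≤ T ∧ ∀ s ∈ Icc t0 t1, v s = w s := by
    intro t0 ht0 heq
    obtain ⟨l, hlL, hal, hal1⟩ := partition_loc hL ha0 haL hainc ht0.1 ht0.2
    obtain ⟨m, hmM, hbm, hbm1⟩ := partition_loc hM hb0 hbM hbinc ht0.1 ht0.2
    set β := min (a (l + 1)) (b (m + 1)) with hβ
    have ht0β : t0 < β := lt_min hal1 hbm1
    have haT : a (l + 1) ≤ T := haL ▸ partition_mono hainc (Nat.succ_le_of_lt hlL) (le_refl L)
    have hbT : b (m + 1) ≤ T := hbM ▸ partition_mono hbinc (Nat.succ_le_of_lt hmM) (le_refl M)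
    have hβT : β ≤ T := le_trans (min_le_left _ _) haT
    have hIsub : Ioo t0 β ⊆ Icc 0 T := fun x hx => ⟨le_trans ht0.1 hx.1.le, le_trans hx.2.le hβT⟩
    have hIsubv : Ioo t0 β ⊆ Ioo (a l) (a (l + 1)) := fun x hx =>
      ⟨lt_of_le_of_lt hal hx.1, lt_of_lt_of_le hx.2 (min_le_left _ _)⟩
    have hIsubw : Ioo t0 β ⊆ Ioo (b m) (b (m + 1)) := fun x hx =>
      ⟨lt_of_le_of_lt hbm hx.1, lt_of_lt_of_le hx.2 (min_le_right _ _)⟩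
    -- no threshold crossing on Ioo t0 β
    have hvne : ∀ x ∈ Ioo t0 β, ∀ k, v x k - uθ ≠ 0 := by
      intro x hx k hk
      apply havoid l hlL x (hIsubv hx)
      refine le_antisymm ?_ (Finset.le_inf' _ _ fun j _ => abs_nonneg _)
      calc Finset.univ.inf' Finset.univ_nonempty (fun j => |v x j - uθ|) ≤ |v x k - uθ| :=
            Finset.inf'_le _ (Finset.mem_univ k)
        _ = 0 := by rw [hk, abs_zero]
    have hwne : ∀ x ∈ Ioo t0 β, ∀ k, w x k - uθ ≠ 0 := by
      intro x hx k hk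
      apply hbvoid m hmM x (hIsubw hx)
      refine le_antisymm ?_ (Finset.le_inf' _ _ fun j _ => abs_nonneg _)
      calc Finset.univ.inf' Finset.univ_nonempty (fun j => |w x j - uθ|) ≤ |w x k - uθ| :=
            Finset.inf'_le _ (Finset.mem_univ k)
        _ = 0 := by rw [hk, abs_zero]
    set t1 := (t0 + β) / 2 with ht1
    have ht01 : t0 < t1 := by simp only [ht1]; linarith
    have ht1β : t1 < β := by simp only [ht1]; linarith
    have ht1I : t1 ∈ Ioo t0 β := ⟨ht01, ht1β⟩
    have ht1T : t1 ≤ T := le_trans ht1β.le hβT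
    -- constant Heaviside values on the interval
    have hsignv : ∀ s ∈ Ioo t0 β, ∀ k, Heaviside (v s k - uθ) = Heaviside (v t1 k - uθ) := by
      intro s hs k
      exact heaviside_const (f := fun x => v x k - uθ) isPreconnected_Ioo
        ((((continuous_apply k).comp_continuousOn hvcont).sub continuousOn_const).mono hIsub)
        (fun x hx => hvne x hx k) hs ht1I
    have hsignw : ∀ s ∈ Ioo t0 β, ∀ k, Heaviside (w s k - uθ) = Heaviside (w t1 k - uθ) := by
      intro s hs k
      exact heaviside_const (f := fun x => w x k - uθ) isPreconnected_Ioo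
        ((((continuous_apply k).comp_continuousOn hwcont).sub continuousOn_const).mono hIsub)
        (fun x hx => hwne x hx k) hs ht1I
    set cv : Fin N → ℝ := fun j => ∑ k, ω j k * Heaviside (v t1 k - uθ) with hcv
    set cw : Fin N → ℝ := fun j => ∑ k, ω j k * Heaviside (w t1 k - uθ) with hcw
    have hODEIv : ∀ s ∈ Ioo t0 β, ∀ j, τ j * v' s j = -v s j + cv j + qinf s j := by
      intro s hs j
      rw [hvODE s (hIsub hs) j]
      congr 1; congr 1
      exact Finset.sum_congr rfl fun k _ => by rw [hsignv s hs k]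
    have hODEIw : ∀ s ∈ Ioo t0 β, ∀ j, τ j * w' s j = -w s j + cw j + qinf s j := by
      intro s hs j
      rw [hwODE s (hIsub hs) j]
      congr 1; congr 1
      exact Finset.sum_congr rfl fun k _ => by rw [hsignw s hs k]
    -- filter at t0 from the right within the interval
    have hnb : (nhdsWithin t0 (Ioo t0 β)).NeBot := by
      rw [← mem_closure_iff_nhdsWithin_neBot, closure_Ioo (ne_of_lt ht0β)]
      exact ⟨le_refl t0, ht0β.le⟩
    have ht0Icc : t0 ∈ Icc (0:ℝ) T := ⟨ht0.1, ht0.2.le⟩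
    have hIci : Ioo t0 β ⊆ Ici t0 := fun x hx => hx.1.le
    -- limit of the ODE as s → t0+
    have limgen : ∀ (u u' : ℝ → Fin N → ℝ), ContinuousOn u (Icc 0 T) →
        ContinuousWithinAt u' (Ici t0) t0 →
        ∀ (c : Fin N → ℝ) (j : Fin N),
        (∀ s ∈ Ioo t0 β, τ j * u' s j = -u s j + c j + qinf s j) →
        τ j * u' t0 j = -u t0 j + c j + qinf t0 j := by
      intro u u' hucont hurs c j hode
      have h1 : Tendsto (fun s => τ j * u' s j) (nhdsWithin t0 (Ioo t0 β))
          (nhds (τ j * u' t0 j)) := by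
        apply Tendsto.const_mul
        exact ((continuous_apply j).tendsto _).comp (hurs.mono hIci)
      have h2 : Tendsto (fun s => -u s j + c j + qinf s j) (nhdsWithin t0 (Ioo t0 β))
          (nhds (-u t0 j + c j + qinf t0 j)) := by
        have hu : Tendsto (fun s => u s j) (nhdsWithin t0 (Ioo t0 β)) (nhds (u t0 j)) :=
          ((continuous_apply j).tendsto _).comp ((hucont t0 ht0Icc).mono hIsub)
        have hq : Tendsto (fun s => qinf s j) (nhdsWithin t0 (Ioo t0 β)) (nhds (qinf t0 j)) :=
          ((continuous_apply j).tendsto _).comp ((hq_cont t0 ht0Icc).mono hIsub)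
        exact ((hu.neg.add tendsto_const_nhds).add hq)
      have hev : (fun s => τ j * u' s j) =ᶠ[nhdsWithin t0 (Ioo t0 β)]
          (fun s => -u s j + c j + qinf s j) :=
        eventually_of_mem self_mem_nhdsWithin fun s hs => hode s hs
      exact tendsto_nhds_unique (h1.congr' hev) h2
    have hlimv : ∀ j, τ j * v' t0 j = -v t0 j + cv j + qinf t0 j := fun j =>
      limgen v v' hvcont (hvrs t0 ht0) cv j (fun s hs => hODEIv s hs j)
    have hlimw : ∀ j, τ j * w' t0 j = -w t0 j + cw j + qinf t0 j := fun j =>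
      limgen w w' hwcont (hwrs t0 ht0) cw j (fun s hs => hODEIw s hs j)
    -- cv = cw
    have hcveq : ∀ j, cv j = ∑ k, ω j k * Heaviside (v t0 k - uθ) := by
      intro j
      have h1 := hvODE t0 ht0Icc j
      have h2 := hlimv j
      linarith [h1, h2]
    have hcweq : ∀ j, cw j = ∑ k, ω j k * Heaviside (w t0 k - uθ) := by
      intro j
      have h1 := hwODE t0 ht0Icc j
      have h2 := hlimw j
      linarith [h1, h2]
    have hccw : ∀ j, cv j = cw j := by
      intro j
      rw [hcveq j, hcweq j, heq]
    -- ODE for the difference on [t0, t1)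
    have hODEd : ∀ x ∈ Ico t0 t1, ∀ j,
        τ j * v' x j - τ j * w' x j = -(v x j - w x j) := by
      intro x hx j
      rcases eq_or_lt_of_le hx.1 with h | h
      · subst h
        rw [hlimv j, hlimw j, heq, hccw j]
        ring
      · have hxI : x ∈ Ioo t0 β := ⟨h, lt_of_le_of_lt hx.2.le ht1β⟩
        rw [hODEIv x hxI j, hODEIw x hxI j, hccw j]
        ring
    -- conclude v = w on [t0, t1] componentwise
    refine ⟨t1, ht01, ht1T, fun s hs => funext fun j => ?_⟩
    have hsub2 : Icc t0 t1 ⊆ Icc 0 T := fun x hx => ⟨le_trans ht0.1 hx.1, le_trans hx.2 ht1T⟩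
    have hzero : ∀ x ∈ Icc t0 t1, v x j - w x j = 0 := by
      apply eq_zero_of_decay (hτ j)
      · exact (((continuous_apply j).comp_continuousOn hvcont).sub
          ((continuous_apply j).comp_continuousOn hwcont)).mono hsub2
      · intro x hx
        have hxIcc : x ∈ Icc (0:ℝ) T := hsub2 ⟨hx.1, hx.2.le⟩
        have hmem : Icc (0:ℝ) T ∈ nhdsWithin x (Ici x) := by
          have h1 : Ici x ∩ Iic T ∈ nhdsWithin x (Ici x) :=
            Filter.inter_mem self_mem_nhdsWithin
              (nhdsWithin_le_nhds (Iic_mem_nhds (lt_of_lt_of_le hx.2 (le_trans ht1β.le hβT))))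
          exact Filter.mem_of_superset h1 fun y hy => ⟨le_trans hxIcc.1 hy.1, hy.2⟩
        have hdv : HasDerivWithinAt (fun t => v t j) (v' x j) (Ici x) x :=
          ((hasDerivWithinAt_pi.1 (hvderiv x hxIcc)) j).mono_of_mem_nhdsWithin hmem
        have hdw : HasDerivWithinAt (fun t => w t j) (w' x j) (Ici x) x :=
          ((hasDerivWithinAt_pi.1 (hwderiv x hxIcc)) j).mono_of_mem_nhdsWithin hmem
        have hd := hdv.sub hdw
        have hval : v' x j - w' x j = -(v x j - w x j) / τ j := by
          have h1 := hODEd x hx j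
          have h2 := (hτ j).ne'
          field_simp
          linarith
        rwa [hval] at hd
      · rw [heq]; ring
    have := hzero s hs
    linarith [this]
  -- global argument via sSup
  set S := {t : ℝ | t ∈ Icc (0:ℝ) T ∧ ∀ s ∈ Icc (0:ℝ) t, v s = w s} with hS
  have h0S : (0:ℝ) ∈ S := by
    refine ⟨⟨le_refl 0, hT.le⟩, fun s hs => ?_⟩
    have : s = 0 := le_antisymm hs.2 hs.1
    rw [this, hvinit, hwinit]
  have hbdd : BddAbove S := ⟨T, fun t ht => ht.1.2⟩
  have hne : S.Nonempty := ⟨0, h0S⟩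
  set c := sSup S with hc
  have hc0 : 0 ≤ c := le_csSup hbdd h0S
  have hcT : c ≤ T := csSup_le hne fun t ht => ht.1.2
  have hlt : ∀ s' ∈ Ico (0:ℝ) c, v s' = w s' := by
    intro s' hs'
    obtain ⟨r, hrS, hsr⟩ := exists_lt_of_lt_csSup hne hs'.2
    exact hrS.2 s' ⟨hs'.1, hsr.le⟩
  have heqc : ∀ s ∈ Icc (0:ℝ) c, v s = w s := by
    intro s hs
    rcases eq_or_lt_of_le hs.2 with h | h
    · rw [h]
      rcases eq_or_lt_of_le (hs.1.trans h.le) with h0 | h0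
      · rw [← h0, hvinit, hwinit]
      · have hnb : (nhdsWithin c (Ico 0 c)).NeBot := by
          rw [← mem_closure_iff_nhdsWithin_neBot, closure_Ico (ne_of_lt h0)]
          exact ⟨hc0, le_refl c⟩
        have hIsub : Ico (0:ℝ) c ⊆ Icc 0 T := fun x hx => ⟨hx.1, le_trans hx.2.le hcT⟩
        have hsIcc : c ∈ Icc (0:ℝ) T := ⟨hc0, hcT⟩
        have tv : Tendsto v (nhdsWithin c (Ico 0 c)) (nhds (v c)) :=
          (hvcont c hsIcc).mono hIsub
        have tw : Tendsto w (nhdsWithin c (Ico 0 c)) (nhds (w c)) :=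
          (hwcont c hsIcc).mono hIsub
        have hev : v =ᶠ[nhdsWithin c (Ico 0 c)] w :=
          eventually_of_mem self_mem_nhdsWithin fun x hx => hlt x hx
        exact tendsto_nhds_unique (tv.congr' hev) tw
    · exact hlt s ⟨hs.1, h⟩
  rcases eq_or_lt_of_le hcT with hcT' | hcT'
  · intro t ht
    exact heqc t ⟨ht.1, hcT' ▸ ht.2⟩
  · exfalso
    obtain ⟨t1, h1, h2, h3⟩ := key c ⟨hc0, hcT'⟩ (heqc c ⟨hc0, le_refl c⟩)
    have ht1S : t1 ∈ S := by
      refine ⟨⟨le_trans hc0 h1.le, h2⟩, fun s hs => ?_⟩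
      rcases le_or_gt s c with h | h
      · exact heqc s ⟨hs.1, h⟩
      · exact h3 s ⟨h.le, hs.2⟩
    exact absurd (le_csSup hbdd ht1S) (not_le.2 h1)
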